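/- Π⁰₂ACC_ℕ is not continuously Weihrauch reducible to C_ℕ: ¬(Π⁰₂ACC_ℕ ≤_W* C_ℕ). -/

import Mathlib

/-- The domain of a first-order problem. -/
def domFO (f : (ℕ → ℕ) → Set ℕ) : Set (ℕ → ℕ) := {p | f p ≠ ∅}

/-- Continuous Weihrauch reducibility between first-order problems. -/
def RedFOFO (f g : (ℕ → ℕ) → Set ℕ) : Prop :=
  ∃ (H : (ℕ → ℕ) → (ℕ → ℕ)) (K : (ℕ → ℕ) × ℕ → ℕ),
    ContinuousOn H (domFO f) ∧
    ContinuousOn K {pn : (ℕ → ℕ) × ℕ | pn.1 ∈ domFO f ∧ pn.2 ∈ g (H pn.1)} ∧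
    (∀ p ∈ domFO f, H p ∈ domFO g) ∧
    (∀ p ∈ domFO f, ∀ n ∈ g (H p), K (p, n) ∈ f p)

/-- Closed choice on the naturals. -/
def CN (p : ℕ → ℕ) : Set ℕ := {n | ∀ k, p k ≠ n + 1}

/-- `Π⁰₂ACC_ℕ`: find a number to which the input sequence does not converge. -/
def Pi02ACCN (p : ℕ → ℕ) : Set ℕ := {k | ¬ ∃ N, ∀ n ≥ N, p n = k}

/-- Every neighborhood in Baire space contains a cylinder. -/
lemma mem_nhds_cyl {p : ℕ → ℕ} {V : Set (ℕ → ℕ)} (hV : V ∈ nhds p) :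
    ∃ m, ∀ q : ℕ → ℕ, (∀ j < m, q j = p j) → q ∈ V := by
  rw [nhds_pi, Filter.mem_pi] at hV
  obtain ⟨I, hIf, t, ht, hsub⟩ := hV
  obtain ⟨b, hb⟩ := hIf.bddAbove
  refine ⟨b + 1, fun q hq => hsub fun i hi => ?_⟩
  have : q i = p i := hq i (Nat.lt_succ_of_le (hb hi))
  rw [this]
  exact mem_of_mem_nhds (ht i)

/-- A continuous function into Baire space is determined on finitely many
coordinates by a finite prefix. -/
lemma cyl_fix {G : (ℕ → ℕ) → (ℕ → ℕ)} (hG : Continuous G) (p : ℕ → ℕ) (N : ℕ) :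
    ∃ m, ∀ q : ℕ → ℕ, (∀ j < m, q j = p j) → ∀ i < N, G q i = G p i := by
  have hopen : IsOpen {q : ℕ → ℕ | ∀ i < N, G q i = G p i} := by
    have heq : {q : ℕ → ℕ | ∀ i < N, G q i = G p i}
        = ⋂ i : Fin N, {q : ℕ → ℕ | G q (i : ℕ) = G p (i : ℕ)} := by
      ext q
      simp only [Set.mem_setOf_eq, Set.mem_iInter]
      constructor
      · intro h i; exact h i i.isLt
      · intro h i hi; exact h ⟨i, hi⟩
    rw [heq]
    refine isOpen_iInter_of_finite fun i => ?_
    have : Continuous fun q : ℕ → ℕ => G q (i : ℕ) := (continuous_apply (i : ℕ)).comp hG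
    exact (isOpen_discrete {G p (i : ℕ)}).preimage this
  exact mem_nhds_cyl (hopen.mem_nhds (by simp))

theorem pi02accn_not_red_cn : ¬ RedFOFO Pi02ACCN CN := by
  rintro ⟨H, K, hH, hK, hdom, hcorr⟩
  -- Pi02ACCN is total
  have hdomU : ∀ p : ℕ → ℕ, p ∈ domFO Pi02ACCN := by
    intro p
    simp only [domFO, Set.mem_setOf_eq]
    intro hemp
    have hall : ∀ k : ℕ, ∃ N, ∀ n ≥ N, p n = k := by
      intro k
      by_contra hk
      have hkm : k ∈ Pi02ACCN p := hk
      rw [hemp] at hkm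
      exact hkm
    obtain ⟨N0, h0⟩ := hall 0
    obtain ⟨N1, h1⟩ := hall 1
    have e0 := h0 (max N0 N1) (le_max_left _ _)
    have e1 := h1 (max N0 N1) (le_max_right _ _)
    omega
  have hdomEq : domFO Pi02ACCN = Set.univ := Set.eq_univ_of_forall hdomU
  have hHc : Continuous H := by
    rw [← continuousOn_univ]
    rwa [hdomEq] at hH
  have hne : ∀ p : ℕ → ℕ, (CN (H p)).Nonempty := by
    intro p
    have h := hdom p (hdomU p)
    exact Set.nonempty_iff_ne_empty.mpr h
  -- the key step: from a prefix of length m we can extend so that everything up to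
  -- the least element of CN (H p) is permanently rejected
  have step : ∀ (p : ℕ → ℕ) (m : ℕ), ∃ (p' : ℕ → ℕ) (m' : ℕ),
      m < m' ∧ (∀ j < m, p' j = p j) ∧
      ∀ q : ℕ → ℕ, (∀ j < m', q j = p' j) → ∀ ν ≤ sInf (CN (H p)), ν ∉ CN (H q) := by
    intro p m
    set n := sInf (CN (H p)) with hn
    have hnmem : n ∈ CN (H p) := Nat.sInf_mem (hne p)
    have hwit : ∀ ν, ν < n → ∃ j, H p j = ν + 1 := by
      intro ν hν
      have h1 : ν ∉ CN (H p) := Nat.notMem_of_lt_sInf hν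
      have h2 : ¬ ∀ k, H p k ≠ ν + 1 := h1
      push_neg at h2
      exact h2
    choose! kf hkf using hwit
    obtain ⟨mB, hmB⟩ := cyl_fix hHc p ((Finset.range n).sup kf + 1)
    -- continuity of K at (p, n)
    have hpnS : (p, n) ∈ {pn : (ℕ → ℕ) × ℕ | pn.1 ∈ domFO Pi02ACCN ∧ pn.2 ∈ CN (H pn.1)} :=
      ⟨hdomU p, hnmem⟩
    obtain ⟨mK, hmK⟩ : ∃ mK, ∀ q : ℕ → ℕ, (∀ j < mK, q j = p j) → n ∈ CN (H q) →
        K (q, n) = K (p, n) := by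
      have hct := hK (p, n) hpnS
      have h1 : K ⁻¹' {K (p, n)} ∈
          nhdsWithin (p, n) {pn : (ℕ → ℕ) × ℕ | pn.1 ∈ domFO Pi02ACCN ∧ pn.2 ∈ CN (H pn.1)} :=
        hct.preimage_mem_nhdsWithin ((isOpen_discrete _).mem_nhds rfl)
      rw [mem_nhdsWithin] at h1
      obtain ⟨U, hUo, hUm, hUsub⟩ := h1
      obtain ⟨u, v, huo, hvo, hpu, hnv, huv⟩ := isOpen_prod_iff.mp hUo p n hUm
      obtain ⟨mK, hmK⟩ := mem_nhds_cyl (huo.mem_nhds hpu)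
      refine ⟨mK, fun q hq hqn => ?_⟩
      have hqU : (q, n) ∈ U := huv ⟨hmK q hq, hnv⟩
      exact hUsub ⟨hqU, ⟨hdomU q, hqn⟩⟩
    set M := max (m + 1) (max mB mK) with hM
    have hmM : m < M := lt_of_lt_of_le (Nat.lt_succ_self m) (le_max_left _ _)
    have hmBM : mB ≤ M := le_trans (le_max_left _ _) (le_max_right _ _)
    have hmKM : mK ≤ M := le_trans (le_max_right _ _) (le_max_right _ _)
    set c := K (p, n) with hc
    set p' : ℕ → ℕ := fun j => if j < M then p j else c with hp'def
    have hagree : ∀ j < M, p' j = p j := by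
      intro j hj
      simp only [hp'def, if_pos hj]
    have hconv : c ∉ Pi02ACCN p' := by
      intro hcm
      have hcm' : ¬ ∃ N, ∀ j ≥ N, p' j = c := hcm
      exact hcm' ⟨M, fun j hj => by simp only [hp'def, if_neg (not_lt.mpr hj)]⟩
    have hrej' : ∀ ν, ν ≤ n → ∃ j, H p' j = ν + 1 := by
      intro ν hν
      rcases lt_or_eq_of_le hν with hlt | heq
      · refine ⟨kf ν, ?_⟩
        have hb : kf ν < (Finset.range n).sup kf + 1 :=
          Nat.lt_succ_of_le (Finset.le_sup (Finset.mem_range.mpr hlt))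
        have := hmB p' (fun j hj => hagree j (lt_of_lt_of_le hj hmBM)) (kf ν) hb
        rw [this]
        exact hkf ν hlt
      · subst heq
        by_contra hno
        push_neg at hno
        have hnS : n ∈ CN (H p') := fun k => hno k
        have hKeq : K (p', n) = c :=
          hmK p' (fun j hj => hagree j (lt_of_lt_of_le hj hmKM)) hnS
        have hK' := hcorr p' (hdomU p') n hnS
        rw [hKeq] at hK'
        exact hconv hK'
    choose! kf' hkf' using hrej'
    obtain ⟨mB', hmB'⟩ := cyl_fix hHc p' ((Finset.range (n + 1)).sup kf' + 1)
    refine ⟨p', max M mB', lt_of_lt_of_le hmM (le_max_left _ _),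
      fun j hj => hagree j (lt_trans hj hmM), ?_⟩
    intro q hq ν hν hmemq
    have hb : kf' ν < (Finset.range (n + 1)).sup kf' + 1 :=
      Nat.lt_succ_of_le (Finset.le_sup (Finset.mem_range.mpr (Nat.lt_succ_of_le hν)))
    have heq : H q (kf' ν) = H p' (kf' ν) :=
      hmB' q (fun j hj => hq j (lt_of_lt_of_le hj (le_max_right _ _))) (kf' ν) hb
    have hmemq' : ∀ k, H q k ≠ ν + 1 := hmemq
    exact hmemq' (kf' ν) (heq.trans (hkf' ν hν))
  -- iterate the step
  choose P M hlt hpre hrej using step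
  set G : (ℕ → ℕ) × ℕ → (ℕ → ℕ) × ℕ := fun s => (P s.1 s.2, M s.1 s.2) with hGdef
  set s0 : (ℕ → ℕ) × ℕ := (fun _ => 0, 0) with hs0def
  set pseq : ℕ → (ℕ → ℕ) := fun i => (G^[i] s0).1 with hpseq
  set mseq : ℕ → ℕ := fun i => (G^[i] s0).2 with hmseq
  have hps : ∀ i, pseq (i + 1) = P (pseq i) (mseq i) := by
    intro i
    simp only [hpseq, hpseq, hmseq, Function.iterate_succ_apply', hGdef]
  have hms : ∀ i, mseq (i + 1) = M (pseq i) (mseq i) := by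
    intro i
    simp only [hpseq, hmseq, Function.iterate_succ_apply', hGdef]
  have hmlt : ∀ i, mseq i < mseq (i + 1) := by
    intro i
    rw [hms i]
    -- need mseq i < M (pseq i) (mseq i)
    exact hlt (pseq i) (mseq i)
  have hmsm : StrictMono mseq := strictMono_nat_of_lt_succ hmlt
  have hpre' : ∀ i, ∀ j < mseq i, pseq (i + 1) j = pseq i j := by
    intro i j hj
    rw [hps i]
    exact hpre (pseq i) (mseq i) j hj
  have hchain : ∀ i i', i ≤ i' → ∀ j < mseq i, pseq i' j = pseq i j := by
    intro i i' h
    induction i', h using Nat.le_induction with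
    | base => intro j hj; rfl
    | succ i'' hi'' ih =>
      intro j hj
      rw [hpre' i'' j (lt_of_lt_of_le hj (hmsm.monotone hi''))]
      exact ih j hj
  set pinf : ℕ → ℕ := fun j => pseq (j + 1) j with hpinf
  have hmge : ∀ i, i ≤ mseq i := by
    intro i
    induction i with
    | zero => exact Nat.zero_le _
    | succ i ih => exact lt_of_le_of_lt ih (hmlt i)
  have hinfagree : ∀ i, ∀ j < mseq i, pinf j = pseq i j := by
    intro i j hj
    rcases le_total i (j + 1) with h | h
    · exact hchain i (j + 1) h j hj
    · exact (hchain (j + 1) i h j (lt_of_lt_of_le (Nat.lt_succ_self j) (hmge (j + 1)))).symm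
  set nseq : ℕ → ℕ := fun i => sInf (CN (H (pseq i))) with hnseq
  have hnlt : ∀ i, nseq i < nseq (i + 1) := by
    intro i
    by_contra hle
    push_neg at hle
    have h1 : nseq (i + 1) ∈ CN (H (pseq (i + 1))) := Nat.sInf_mem (hne _)
    have h2 := hrej (pseq i) (mseq i) (pseq (i + 1))
      (fun j hj => by rw [hps i]) (nseq (i + 1)) hle
    exact h2 h1
  have hnsm : StrictMono nseq := strictMono_nat_of_lt_succ hnlt
  have hnge : ∀ i, i ≤ nseq i := fun i => hnsm.le_apply
  -- final contradiction
  obtain ⟨ν, hν⟩ := hne pinf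
  have hag : ∀ j < M (pseq ν) (mseq ν), pinf j = P (pseq ν) (mseq ν) j := by
    intro j hj
    rw [← hps ν, ← hms ν] at *
    exact hinfagree (ν + 1) j hj
  exact hrej (pseq ν) (mseq ν) pinf hag ν (hnge ν) hν
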